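/- Let V be a normed vector space (over ℝ) with a direct sum decomposition V = V₁ ⊕ V₂ (write v = v^∥ + v^⊥ for v^∥ ∈ V₁, v^⊥ ∈ V₂), and let A: V → V be a linear map such that: (i) A(V₁) ⊆ V₁ with ‖A v‖ ≥ 2‖v‖ for all v ∈ V₁; (ii) (A v)^⊥ = (2m+1)·v^⊥ for all v ∈ V₂, where m ≥ 1; (iii) ‖(A v)^∥‖ ≤ K‖v‖ for all v ∈ V₂, where K > 0. Define |||v||| = max((1/K)‖v^∥‖, ‖v^⊥‖). Then |||A v||| > |||v||| for all nonzero v ∈ V. -/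
import Mathlib


/-- the cone argument. `V = V₁ ⊕ V₂` is encoded by complementary
projections `P` (onto `V₁`, `v ↦ v^∥`) and `Q` (onto `V₂`, `v ↦ v^⊥`).
If a linear map `A` preserves `V₁` expanding it by factor `2`, acts on the `V₂`-component
by multiplication by `2m+1` (`m ≥ 1`), and leaks from `V₂` into `V₁` with norm at most `K`,
then `A` strictly expands the Finsler norm `|||v||| = max(K⁻¹‖v^∥‖, ‖v^⊥‖)` on nonzero
vectors. -/
theorem stmt1 {V : Type*} [NormedAddCommGroup V] [NormedSpace ℝ V]
    (P Q : V →ₗ[ℝ] V)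
    (hPQ : ∀ v, P v + Q v = v)
    (hPP : ∀ v, P (P v) = P v) (hQQ : ∀ v, Q (Q v) = Q v)
    (hPQ0 : ∀ v, P (Q v) = 0) (hQP0 : ∀ v, Q (P v) = 0)
    (A : V →ₗ[ℝ] V) (m : ℕ) (hm : 1 ≤ m) (K : ℝ) (hK : 0 < K)
    -- (i) `A(V₁) ⊆ V₁` and `‖A v‖ ≥ 2‖v‖` on `V₁`
    (hA1 : ∀ v, Q (A (P v)) = 0)
    (hA1' : ∀ v, 2 * ‖P v‖ ≤ ‖A (P v)‖)
    -- (ii) `(A v)^⊥ = (2m+1) v^⊥` on `V₂`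
    (hA2 : ∀ v, Q (A (Q v)) = ((2 * (m : ℝ) + 1)) • Q v)
    -- (iii) `‖(A v)^∥‖ ≤ K ‖v‖` on `V₂`
    (hA3 : ∀ v, ‖P (A (Q v))‖ ≤ K * ‖Q v‖) :
    ∀ v : V, v ≠ 0 →
      max (K⁻¹ * ‖P v‖) ‖Q v‖ < max (K⁻¹ * ‖P (A v)‖) ‖Q (A v)‖ := by
  intro v hv
  have hsplit : A v = A (P v) + A (Q v) := by
    conv_lhs => rw [← hPQ v]
    rw [map_add]
  have hAP : A (P v) = P (A (P v)) := by
    have := hPQ (A (P v)); rw [hA1 v, add_zero] at this; exact this.symm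
  have hPA : P (A v) = A (P v) + P (A (Q v)) := by
    rw [hsplit, map_add, ← hAP]
  have hQA : Q (A v) = (2 * (m : ℝ) + 1) • Q v := by
    rw [hsplit, map_add, hA1 v, hA2 v, zero_add]
  have hQn : ‖Q (A v)‖ = (2 * (m : ℝ) + 1) * ‖Q v‖ := by
    rw [hQA, norm_smul, Real.norm_eq_abs, abs_of_pos (by positivity)]
  have hPn : 2 * ‖P v‖ - K * ‖Q v‖ ≤ ‖P (A v)‖ := by
    have h1 : ‖A (P v)‖ - ‖P (A (Q v))‖ ≤ ‖P (A v)‖ := by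
      rw [hPA]
      have h0 := norm_add_le (A (P v) + P (A (Q v))) (-(P (A (Q v))))
      simp only [add_neg_cancel_right, norm_neg] at h0
      linarith
    have := hA3 v
    linarith [hA1' v]
  have hm' : (3 : ℝ) ≤ 2 * (m : ℝ) + 1 := by
    have : (1 : ℝ) ≤ (m : ℝ) := by exact_mod_cast hm
    linarith
  have hPv : 0 ≤ ‖P v‖ := norm_nonneg _
  have hQv : 0 ≤ ‖Q v‖ := norm_nonneg _
  have hKi : 0 < K⁻¹ := by positivity
  rcases le_or_gt (K⁻¹ * ‖P v‖) ‖Q v‖ with h | h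
  · have hQpos : 0 < ‖Q v‖ := by
      rcases lt_or_eq_of_le hQv with h' | h'
      · exact h'
      · exfalso
        have hq0 : Q v = 0 := norm_eq_zero.mp h'.symm
        have hp0 : ‖P v‖ = 0 := by nlinarith
        have : P v = 0 := norm_eq_zero.mp hp0
        exact hv (by rw [← hPQ v, this, hq0, add_zero])
    have : max (K⁻¹ * ‖P v‖) ‖Q v‖ = ‖Q v‖ := max_eq_right h
    rw [this]
    calc ‖Q v‖ < (2 * (m : ℝ) + 1) * ‖Q v‖ := by nlinarith
    _ = ‖Q (A v)‖ := hQn.symm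
    _ ≤ _ := le_max_right _ _
  · have : max (K⁻¹ * ‖P v‖) ‖Q v‖ = K⁻¹ * ‖P v‖ := max_eq_left h.le
    rw [this]
    have key : K⁻¹ * ‖P v‖ < K⁻¹ * ‖P (A v)‖ := by
      have h2 : K * ‖Q v‖ < ‖P v‖ := by
        have := (mul_lt_mul_iff_right₀ hK).mpr h
        rw [← mul_assoc, mul_inv_cancel₀ hK.ne', one_mul] at this
        exact this
      have : ‖P v‖ < ‖P (A v)‖ := by linarith
      exact (mul_lt_mul_iff_right₀ hKi).mpr this
    exact lt_of_lt_of_le key (le_max_left _ _)
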